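/- The polynomials P̃_n^{(α,c)}(x) = ((-1)^n / c^{2n}) ∑_{k=0}^n c^k (n-k+1)_k L_k^{(α)}(c x) satisfy P̃_n^{(α+1,c)}(x) = ∑_{j=0}^n (n!/j!) (-1)^{j+n} c^{j-n} P̃_j^{(α,c)}(x). -/

import Mathlib

/-- Generalized Laguerre polynomial `L_n^{(α)}(x)` with real parameter `α`. -/
noncomputable def genLaguerre (n : ℕ) (α x : ℝ) : ℝ :=
  ∑ j ∈ Finset.range (n + 1),
    (-1) ^ j * ((∏ i ∈ Finset.range (n - j), (α + j + 1 + i)) / (Nat.factorial (n - j))) *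
      x ^ j / (Nat.factorial j)
/-- `P̃_n^{(α,c)}(x) = ((-1)^n / c^{2n}) ∑_{k=0}^n c^k (n-k+1)_k L_k^{(α)}(c x)`. -/
noncomputable def Pt (n : ℕ) (α c x : ℝ) : ℝ :=
  ((-1) ^ n / c ^ (2 * n)) *
    ∑ k ∈ Finset.range (n + 1),
      c ^ k * (∏ i ∈ Finset.range k, ((n : ℝ) - k + 1 + i)) * genLaguerre k α (c * x)

lemma prod_step (β : ℝ) (N : ℕ) :
    (∏ i ∈ Finset.range (N+1), (β + 1 + i)) / (Nat.factorial (N+1))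
      = (∏ i ∈ Finset.range N, (β + 1 + i)) / (Nat.factorial N)
        + (∏ i ∈ Finset.range (N+1), (β + i)) / (Nat.factorial (N+1)) := by
  have h1 : (∏ i ∈ Finset.range (N+1), (β + i)) = β * ∏ i ∈ Finset.range N, (β + 1 + i) := by
    rw [Finset.prod_range_succ']
    have : (∏ x ∈ Finset.range N, (β + ↑(x+1))) = ∏ i ∈ Finset.range N, (β + 1 + ↑i) :=
      Finset.prod_congr rfl (fun i _ => by push_cast; ring)
    rw [this]; push_cast; ring
  rw [h1, Finset.prod_range_succ, Nat.factorial_succ]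
  have h2 : (Nat.factorial N : ℝ) ≠ 0 := Nat.cast_ne_zero.mpr N.factorial_ne_zero
  field_simp
  push_cast
  ring

lemma lag_rec (k : ℕ) (α x : ℝ) :
    genLaguerre (k+1) (α+1) x = genLaguerre k (α+1) x + genLaguerre (k+1) α x := by
  unfold genLaguerre
  rw [Finset.sum_range_succ (n := k+1), Finset.sum_range_succ (n := k+1)]
  rw [add_assoc]
  have hsum : (∑ j ∈ Finset.range (k+1),
      (-1:ℝ) ^ j * ((∏ i ∈ Finset.range (k+1 - j), (α + 1 + j + 1 + i)) / (Nat.factorial (k+1-j))) * x ^ j / (Nat.factorial j))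
      = (∑ j ∈ Finset.range (k+1),
      (-1:ℝ) ^ j * ((∏ i ∈ Finset.range (k - j), (α + 1 + j + 1 + i)) / (Nat.factorial (k-j))) * x ^ j / (Nat.factorial j))
      + (∑ j ∈ Finset.range (k+1),
      (-1:ℝ) ^ j * ((∏ i ∈ Finset.range (k+1 - j), (α + j + 1 + i)) / (Nat.factorial (k+1-j))) * x ^ j / (Nat.factorial j)) := by
    rw [← Finset.sum_add_distrib]
    apply Finset.sum_congr rfl
    intro j hj
    have hjk : j ≤ k := Nat.lt_succ_iff.mp (Finset.mem_range.mp hj)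
    have hN : k + 1 - j = (k - j) + 1 := by omega
    rw [hN]
    have := prod_step (α + j + 1) (k - j)
    have e1 : (∏ i ∈ Finset.range (k-j+1), (α + 1 + j + 1 + (i:ℝ)))
        = ∏ i ∈ Finset.range (k-j+1), (α + j + 1 + 1 + (i:ℝ)) :=
      Finset.prod_congr rfl (fun i _ => by ring)
    have e2 : (∏ i ∈ Finset.range (k-j), (α + 1 + j + 1 + (i:ℝ)))
        = ∏ i ∈ Finset.range (k-j), (α + j + 1 + 1 + (i:ℝ)) :=
      Finset.prod_congr rfl (fun i _ => by ring)
    rw [e1, e2]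
    rw [this]
    ring
  rw [hsum]
  simp only [Nat.sub_self, Finset.range_zero, Finset.prod_empty, Nat.factorial_zero,
    Nat.cast_one, div_one, mul_one]
  ring

lemma lag_shift (k : ℕ) (α x : ℝ) :
    genLaguerre k (α+1) x = ∑ i ∈ Finset.range (k+1), genLaguerre i α x := by
  induction k with
  | zero => unfold genLaguerre; simp
  | succ k ih => rw [Finset.sum_range_succ, ← ih, lag_rec]

lemma ascProd (n d : ℕ) (h : d ≤ n) :
    (∏ m ∈ Finset.range d, ((n:ℝ) - d + 1 + m)) * (Nat.factorial (n - d) : ℝ)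
      = (Nat.factorial n : ℝ) := by
  induction d with
  | zero => simp
  | succ d ih =>
    have hd : d ≤ n := Nat.le_of_succ_le h
    have hnd : n - d = (n - (d+1)) + 1 := by omega
    rw [Finset.prod_range_succ']
    have e1 : (∏ k ∈ Finset.range d, ((n:ℝ) - ↑(d+1) + 1 + ↑(k+1)))
        = ∏ m ∈ Finset.range d, ((n:ℝ) - d + 1 + m) :=
      Finset.prod_congr rfl (fun i _ => by push_cast; ring)
    have e2 : ((n:ℝ) - ↑(d+1) + 1 + ((0:ℕ):ℝ)) = ((n - d : ℕ) : ℝ) := by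
      push_cast [Nat.cast_sub hd]; ring
    rw [e1, e2]
    calc (∏ m ∈ Finset.range d, ((n:ℝ) - d + 1 + m)) * ((n - d : ℕ):ℝ) * (Nat.factorial (n - (d+1)) : ℝ)
        = (∏ m ∈ Finset.range d, ((n:ℝ) - d + 1 + m)) * (((n-d:ℕ):ℝ) * (Nat.factorial (n - (d+1)) : ℝ)) := by ring
      _ = (∏ m ∈ Finset.range d, ((n:ℝ) - d + 1 + m)) * (Nat.factorial (n - d) : ℝ) := by
          rw [hnd, Nat.factorial_succ]; push_cast; ring_nf
      _ = _ := ih hd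

lemma sum_tri {M : Type*} [AddCommMonoid M] {n : ℕ} (f : ℕ → ℕ → M) :
    ∑ k ∈ Finset.range (n+1), ∑ i ∈ Finset.range (k+1), f k i
      = ∑ i ∈ Finset.range (n+1), ∑ k ∈ Finset.Ico i (n+1), f k i := by
  apply Finset.sum_comm'
  intro k i
  simp only [Finset.mem_range, Finset.mem_Ico]
  omega


theorem Pt_alpha_shift_sum (n : ℕ) (α c x : ℝ) (hc : c ≠ 0) :
    Pt n (α + 1) c x =
      ∑ j ∈ Finset.range (n + 1),
        ((Nat.factorial n : ℝ) / (Nat.factorial j)) * (-1) ^ (j + n) *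
          c ^ ((j : ℤ) - (n : ℤ)) * Pt j α c x := by
  unfold Pt
  simp_rw [lag_shift]
  simp_rw [Finset.mul_sum]
  rw [sum_tri, sum_tri]
  apply Finset.sum_congr rfl
  intro i hi
  apply Finset.sum_nbij' (i := fun k => n + i - k) (j := fun j => n + i - j)
  · intro k hk; simp only [Finset.mem_Ico] at *; omega
  · intro j hj; simp only [Finset.mem_Ico] at *; omega
  · intro k hk; simp only [Finset.mem_Ico] at *; omega
  · intro j hj; simp only [Finset.mem_Ico] at *; omega
  · intro k hk
    simp only [Finset.mem_Ico] at hk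
    simp only [Finset.mem_range] at hi
    obtain ⟨d, rfl⟩ : ∃ d, k = i + d := ⟨k - i, by omega⟩
    obtain ⟨e, rfl⟩ : ∃ e, n = i + d + e := ⟨n - (i + d), by omega⟩
    have hj : i + d + e + i - (i + d) = i + e := by omega
    rw [hj]
    -- split the big product
    have hsplit : (∏ r ∈ Finset.range (i + d), ((↑(i+d+e) : ℝ) - ↑(i+d) + 1 + ↑r))
        = (∏ r ∈ Finset.range i, ((↑(i+e) : ℝ) - ↑i + 1 + ↑r))
          * (∏ m ∈ Finset.range d, ((↑(i+d+e) : ℝ) - ↑d + 1 + ↑m)) := by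
      rw [Finset.prod_range_add]
      congr 1
      · exact Finset.prod_congr rfl (fun r _ => by push_cast; ring)
      · exact Finset.prod_congr rfl (fun m _ => by push_cast; ring)
    rw [hsplit]
    have hasc := ascProd (i + d + e) d (by omega)
    have hnd : i + d + e - d = i + e := by omega
    rw [hnd] at hasc
    have hz : c ^ ((↑(i+e) : ℤ) - (↑(i+d+e) : ℤ)) = c ^ (i+e) / c ^ (i+d+e) := by
      rw [zpow_sub₀ hc, zpow_natCast, zpow_natCast]
    rw [hz]
    rw [show (i+e) + (i+d+e) = (i+e) + (i+d+e) from rfl, pow_add]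
    have hfe : ((Nat.factorial (i+e) : ℝ)) ≠ 0 := Nat.cast_ne_zero.mpr (Nat.factorial_ne_zero _)
    rw [← hasc]
    have hs : ((-1:ℝ))^(i+e) * (-1)^(i+e) = 1 := by
      rw [← pow_add]; exact Even.neg_one_pow ⟨i+e, rfl⟩
    generalize genLaguerre i α (c * x) = L
    generalize (∏ r ∈ Finset.range i, ((↑(i+e):ℝ) - ↑i + 1 + ↑r)) = Q
    generalize (∏ m ∈ Finset.range d, ((↑(i+d+e):ℝ) - ↑d + 1 + ↑m)) = R
    have h2 : ((-1:ℝ))^i * (-1)^e = (-1)^(i+e) := (pow_add _ _ _).symm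
    rcases mul_self_eq_one_iff.mp hs with h1 | h1
    · rw [h1]; field_simp; ring_nf
      linear_combination (-(c^(i*4)*c^(d*2)*c^(e*3)*Q*R*L*((-1:ℝ))^d*(-1)^i*(-1)^e)) * (h2.trans h1)
    · rw [h1]; field_simp; ring_nf
      linear_combination (c^(i*4)*c^(d*2)*c^(e*3)*Q*R*L*((-1:ℝ))^d*(-1)^i*(-1)^e) * (h2.trans h1)
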